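/- arXiv:1702.00005 — 3 statements merged into one kernel-verified Lean document; each statement's English description precedes it below -/
import Mathlib

section
/- Let n be a positive integer not divisible by 3 and let m ≥ 2 be an integer. Then the subgroup of GL(3,ℂ) generated by E, L_n and Y₁(m) (this is the group W(n, m)) has order 3^{m+1}·n². -/
open Matrix

/-- The matrix `E` with entries `E₀₁ = E₁₂ = E₂₀ = 1` and all other entries `0`. -/
noncomputable def Ematrix : Matrix (Fin 3) (Fin 3) ℂ := !![0, 1, 0; 0, 0, 1; 1, 0, 0]

/-- The matrix `L_n = diag(1, ν, ν⁻¹)` with `ν = exp(2πi/n)`. -/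
noncomputable def Lmatrix (n : ℕ) : Matrix (Fin 3) (Fin 3) ℂ :=
  Matrix.diagonal ![1, Complex.exp (2 * (Real.pi : ℂ) * Complex.I / (n : ℂ)),
    (Complex.exp (2 * (Real.pi : ℂ) * Complex.I / (n : ℂ)))⁻¹]

/-- The matrix `Y₁(m) = diag(μ, μω, μω²)`, with `μ = exp(2πi/3^m)` and `ω = exp(2πi/3)`. -/
noncomputable def Y1matrix (m : ℕ) : Matrix (Fin 3) (Fin 3) ℂ :=
  Matrix.diagonal ![Complex.exp (2 * (Real.pi : ℂ) * Complex.I / ((3 : ℂ) ^ m)),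
    Complex.exp (2 * (Real.pi : ℂ) * Complex.I / ((3 : ℂ) ^ m)) *
      Complex.exp (2 * (Real.pi : ℂ) * Complex.I / 3),
    Complex.exp (2 * (Real.pi : ℂ) * Complex.I / ((3 : ℂ) ^ m)) *
      Complex.exp (2 * (Real.pi : ℂ) * Complex.I / 3) ^ 2]

lemma aux_pow_mod {G : Type*} [Monoid G] (x : G) (N : ℕ) (h : x ^ N = 1) (e : ℕ) :
    x ^ e = x ^ (e % N) := by
  conv_lhs => rw [← Nat.mod_add_div e N]
  rw [pow_add, pow_mul, h, one_pow, mul_one]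

lemma aux_zpow_val {G : Type*} [Group G] (x : G) (N : ℕ) [NeZero N] (h : x ^ N = 1) (a : ℤ) :
    x ^ a = x ^ (((a : ZMod N)).val) := by
  have hd : ((N : ℤ)) ∣ a - (((a : ZMod N)).val : ℤ) := by
    have := (ZMod.intCast_zmod_eq_zero_iff_dvd (a - (((a : ZMod N)).val : ℤ)) N).mp ?_
    · exact this
    · push_cast
      simp [ZMod.natCast_val, ZMod.cast_id]
  obtain ⟨k, hk⟩ := hd
  have ha : a = (((a : ZMod N)).val : ℤ) + N * k := by linarith
  conv_lhs => rw [ha]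
  rw [_root_.zpow_add, zpow_natCast, _root_.zpow_mul, zpow_natCast, h]; simp

lemma aux_split (A B : ℕ) (hA : A ≠ 0) (hB : B ≠ 0) (hAB : Nat.Coprime A B) {x y x' y' : ℂ}
    (hx : x ^ A = 1) (hx' : x' ^ A = 1) (hy : y ^ B = 1) (hy' : y' ^ B = 1)
    (hxy : x * y = x' * y') : x = x' ∧ y = y' := by
  have hxne : x ≠ 0 := by intro h0; rw [h0, zero_pow hA] at hx; exact zero_ne_one hx
  have hx'ne : x' ≠ 0 := by intro h0; rw [h0, zero_pow hA] at hx'; exact zero_ne_one hx'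
  have hyne : y ≠ 0 := by intro h0; rw [h0, zero_pow hB] at hy; exact zero_ne_one hy
  have hy'ne : y' ≠ 0 := by intro h0; rw [h0, zero_pow hB] at hy'; exact zero_ne_one hy'
  set z : ℂ := x * x'⁻¹ with hz
  have hzx : z ≠ 0 := mul_ne_zero hxne (inv_ne_zero hx'ne)
  have hzA : z ^ A = 1 := by rw [hz, mul_pow, hx, inv_pow, hx', one_mul, inv_one]
  have hzy : z = y' * y⁻¹ := by
    field_simp [hz]
    have h' : x' * x'⁻¹ = 1 := mul_inv_cancel₀ hx'ne
    linear_combination x'⁻¹ * hxy + y' * h'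
  have hzB : z ^ B = 1 := by rw [hzy, mul_pow, hy', inv_pow, hy, one_mul, inv_one]
  have hz1 : z = 1 := by
    have key : z ^ (1 : ℤ) = 1 := by
      have hbez : (1 : ℤ) = A * Nat.gcdA A B + B * Nat.gcdB A B := by
        have := Nat.gcd_eq_gcd_ab A B
        rwa [hAB, Nat.cast_one] at this
      rw [hbez, zpow_add₀ hzx, _root_.zpow_mul, _root_.zpow_mul, zpow_natCast, zpow_natCast,
        hzA, hzB]; simp
    simpa using key
  have hxx : x = x' := by
    field_simp [hz] at hz1
    rw [hz] at hz1
    exact (mul_inv_eq_one₀ hx'ne).mp hz1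
  refine ⟨hxx, ?_⟩
  rw [hxx] at hxy
  exact mul_left_cancel₀ hx'ne hxy

lemma diag3 (x y z : ℂ) : Matrix.diagonal ![x,y,z] = !![x,0,0;0,y,0;0,0,z] := by
  ext i j
  fin_cases i <;> fin_cases j <;> simp [Matrix.diagonal, Matrix.vecHead, Matrix.vecTail]

lemma Eshift (x y z : ℂ) :
    Ematrix * Matrix.diagonal ![x,y,z] = Matrix.diagonal ![y,z,x] * Ematrix := by
  rw [diag3, diag3, Ematrix]
  norm_num [Matrix.mul_fin_three]

lemma Ecube : Ematrix ^ 3 = 1 := by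
  rw [Ematrix, pow_succ, pow_succ, pow_one]
  norm_num [Matrix.mul_fin_three]
  exact (Matrix.one_fin_three).symm

lemma aux_lcomm {G : Type*} [Semigroup G] {a b : G} (h : Commute a b) (c : G) :
    a * (b * c) = b * (a * c) := by rw [← mul_assoc, h.eq, mul_assoc]

lemma aux_D_mul {G : Type*} [Group G] {Y L P : G} (hYL : Commute Y L) (hYP : Commute Y P)
    (hLP : Commute L P) (a b c x y z : ℤ) :
    (Y^a * L^b * P^c) * (Y^x * L^y * P^z) = Y^(a+x) * L^(b+y) * P^(c+z) := by
  simp only [_root_.zpow_add, mul_assoc]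
  rw [aux_lcomm ((hYP.zpow_zpow x c).symm), aux_lcomm ((hYL.zpow_zpow x b).symm),
    aux_lcomm ((hLP.zpow_zpow y c).symm)]

lemma aux_D_inv {G : Type*} [Group G] {Y L P : G} (hYL : Commute Y L) (hYP : Commute Y P)
    (hLP : Commute L P) (a b c : ℤ) :
    (Y^a * L^b * P^c)⁻¹ = Y^(-a) * L^(-b) * P^(-c) := by
  symm
  apply eq_inv_of_mul_eq_one_left
  rw [aux_D_mul hYL hYP hLP]
  simp

lemma aux_conj {G : Type*} [Group G] {E Y Q : G} (h : E * Y * E⁻¹ = Q) (a : ℤ) :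
    E * Y ^ a * E⁻¹ = Q ^ a := by
  have := map_zpow (MulAut.conj E) Y a
  simp only [MulAut.conj_apply] at this
  rw [this, h]

lemma aux_entry (v : Fin 3 → ℂ) (i : ℕ) (hi : i < 3) (j : Fin 3) :
    (Matrix.diagonal v * Ematrix^i) 0 j = if (j : ℕ) = i then v 0 else 0 := by
  interval_cases i <;> fin_cases j <;>
    simp [Ematrix, pow_succ, Matrix.mul_apply, Fin.sum_univ_three, Matrix.diagonal]

lemma aux_cancelE2 (v w : Fin 3 → ℂ) (i : ℕ) (hi : i < 3)
    (h : Matrix.diagonal v * Ematrix^i = Matrix.diagonal w * Ematrix^i) : v = w := by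
  have h2 := congrArg (fun M => M * Ematrix^(3-i)) h
  simp only [mul_assoc, ← pow_add] at h2
  rw [show i + (3-i) = 3 from by omega, Ecube, mul_one, mul_one] at h2
  exact Matrix.diagonal_injective h2

lemma aux_cancelE (v w : Fin 3 → ℂ) (i j : ℕ) (hi : i < 3) (hj : j < 3) (hv : v 0 ≠ 0)
    (h : Matrix.diagonal v * Ematrix^i = Matrix.diagonal w * Ematrix^j) : i = j ∧ v = w := by
  have hij : i = j := by
    by_contra hne
    have := congrFun (congrFun h 0) ⟨i, hi⟩
    rw [aux_entry v i hi, aux_entry w j hj] at this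
    simp at this
    rw [if_neg (by simpa using hne)] at this
    exact hv this
  subst hij
  exact ⟨rfl, aux_cancelE2 v w i hi h⟩

lemma diagUnit_aux {v w : Fin 3 → ℂ} (h : v * w = 1) :
    (Matrix.diagonal v) * (Matrix.diagonal w) = 1 := by
  rw [Matrix.diagonal_mul_diagonal]
  rw [show (fun i => v i * w i) = v * w from rfl, h]
  exact Matrix.diagonal_one

/-- The group `W(n, m)`, generated by `E`, `L_n` and `Y₁(m)` inside `GL(3,ℂ)`,
has order `3^{m+1}·n²`. -/
theorem Wnm_order (n : ℕ) (hn : 0 < n) (hn3 : ¬ 3 ∣ n)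
    (m : ℕ) (hm : 2 ≤ m)
    (E L Y : GL (Fin 3) ℂ)
    (hE : E.val = Ematrix) (hL : L.val = Lmatrix n) (hY : Y.val = Y1matrix m) :
    Nat.card ↥(Subgroup.closure ({E, L, Y} : Set (GL (Fin 3) ℂ)))
      = 3 ^ (m + 1) * n ^ 2 := by
  obtain ⟨k, rfl⟩ : ∃ k, m = k + 2 := ⟨m - 2, by omega⟩
  set ν := Complex.exp (2 * (Real.pi:ℂ) * Complex.I / (n:ℂ)) with hνdef
  set μ := Complex.exp (2 * (Real.pi:ℂ) * Complex.I / ((3:ℂ) ^ (k+2))) with hμdef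
  set ω := Complex.exp (2 * (Real.pi:ℂ) * Complex.I / 3) with hωdef
  have hν : IsPrimitiveRoot ν n := Complex.isPrimitiveRoot_exp n hn.ne'
  have hμ : IsPrimitiveRoot μ (3^(k+2)) := by
    have h := Complex.isPrimitiveRoot_exp (3^(k+2)) (by positivity)
    have hc : ((3^(k+2) : ℕ) : ℂ) = (3:ℂ)^(k+2) := by push_cast; ring
    rwa [hμdef, ← hc]
  have hμ0 : μ ≠ 0 := Complex.exp_ne_zero _
  have hν0 : ν ≠ 0 := Complex.exp_ne_zero _
  have hω0 : ω ≠ 0 := Complex.exp_ne_zero _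
  have hω3 : ω ^ 3 = 1 := by
    have h := Complex.isPrimitiveRoot_exp 3 (by norm_num)
    have h3 : ((3:ℕ):ℂ) = (3:ℂ) := by norm_num
    rw [h3] at h
    exact h.pow_eq_one
  have hνn : ν ^ n = 1 := hν.pow_eq_one
  have hμN : μ ^ (3^(k+2)) = 1 := hμ.pow_eq_one
  have hs1 : μ ^ (3^(k+1) : ℕ) = ω := by
    rw [hμdef, ← Complex.exp_nat_mul, hωdef]
    congr 1
    have h3 : ((3:ℂ))^(k+2) ≠ 0 := pow_ne_zero _ (by norm_num)
    field_simp
    push_cast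
    ring
  have hω31 : ω ^ ((3:ℕ)^(k+1)) = 1 := by
    rw [show (3:ℕ)^(k+1) = 3 * 3^k from by ring, pow_mul, hω3, one_pow]
  have hωN : ω ^ ((3:ℕ)^(k+2)) = 1 := by
    rw [show (3:ℕ)^(k+2) = 3 * 3^(k+1) from by ring, pow_mul, hω3, one_pow]
  -- the auxiliary units L2 L3
  have hv1 : (![ν,ν⁻¹,1] : Fin 3 → ℂ) * ![ν⁻¹,ν,1] = 1 := by
    funext i
    fin_cases i <;>
      simp [mul_inv_cancel₀ hν0, inv_mul_cancel₀ hν0]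
  have hv1' : (![ν⁻¹,ν,1] : Fin 3 → ℂ) * ![ν,ν⁻¹,1] = 1 := by rw [mul_comm]; exact hv1
  have hv2 : (![ν⁻¹,1,ν] : Fin 3 → ℂ) * ![ν,1,ν⁻¹] = 1 := by
    funext i
    fin_cases i <;>
      simp [mul_inv_cancel₀ hν0, inv_mul_cancel₀ hν0]
  have hv2' : (![ν,1,ν⁻¹] : Fin 3 → ℂ) * ![ν⁻¹,1,ν] = 1 := by rw [mul_comm]; exact hv2
  set L2 : GL (Fin 3) ℂ := (Units.mk (Matrix.diagonal ![ν,ν⁻¹,1]) (Matrix.diagonal ![ν⁻¹,ν,1])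
    (diagUnit_aux hv1) (diagUnit_aux hv1')) with hL2def
  set L3 : GL (Fin 3) ℂ := (Units.mk (Matrix.diagonal ![ν⁻¹,1,ν]) (Matrix.diagonal ![ν,1,ν⁻¹])
    (diagUnit_aux hv2) (diagUnit_aux hv2')) with hL3def
  have hL2v : (L2).val = Matrix.diagonal ![ν,ν⁻¹,1] := rfl
  have hL3v : (L3).val = Matrix.diagonal ![ν⁻¹,1,ν] := rfl
  have hLm : Lmatrix n = Matrix.diagonal ![1,ν,ν⁻¹] := rfl
  have hYm : Y1matrix (k+2) = Matrix.diagonal ![μ, μ*ω, μ*ω^2] := rfl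
  -- group relations
  have hEL : E * L = L2 * E := Units.ext (by
    rw [Units.val_mul, Units.val_mul, hE, hL, hL2v, hLm]
    exact Eshift 1 ν ν⁻¹)
  have hEL2 : E * L2 = L3 * E := Units.ext (by
    rw [Units.val_mul, Units.val_mul, hE, hL2v, hL3v]
    exact Eshift ν ν⁻¹ 1)
  have e1 : μ ^ (3^(k+1)+1 : ℕ) = μ * ω := by rw [pow_succ, hs1, mul_comm]
  have eω : ω ^ (3^(k+1)+1 : ℕ) = ω := by rw [pow_succ, hω31, one_mul]
  have e2 : (μ*ω) ^ (3^(k+1)+1 : ℕ) = μ * ω^2 := by rw [mul_pow, e1, eω]; ring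
  have e3 : (μ*ω^2) ^ (3^(k+1)+1 : ℕ) = μ := by
    rw [mul_pow, e1, ← pow_mul, mul_comm 2 (3^(k+1)+1 : ℕ), pow_mul, eω]
    rw [show μ * ω * ω^2 = μ * ω^3 from by ring, hω3, mul_one]
  have hYu : ((Y^(3^(k+1)+1 : ℕ)).val : Matrix (Fin 3) (Fin 3) ℂ)
      = Matrix.diagonal ![μ*ω, μ*ω^2, μ] := by
    rw [Units.val_pow_eq_pow_val, hY, hYm, Matrix.diagonal_pow]
    apply congrArg Matrix.diagonal
    funext i
    fin_cases i <;> simp [Pi.pow_apply, e1, e2, e3]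
  have hEY : E * Y = Y^(3^(k+1)+1 : ℕ) * E := Units.ext (by
    rw [Units.val_mul, Units.val_mul, hE, hY, hYm, hYu]
    exact Eshift μ (μ*ω) (μ*ω^2))
  have hE3 : E^3 = 1 := Units.ext (by
    rw [Units.val_pow_eq_pow_val, hE, Ecube, Units.val_one])
  have hω2N : (ω^2)^((3:ℕ)^(k+2)) = 1 := by
    rw [← pow_mul, mul_comm, pow_mul, hωN, one_pow]
  have hYN : Y^((3:ℕ)^(k+2)) = 1 := Units.ext (by
    rw [Units.val_pow_eq_pow_val, hY, hYm, Matrix.diagonal_pow, Units.val_one]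
    rw [show (![μ, μ*ω, μ*ω^2] : Fin 3 → ℂ) ^ ((3:ℕ)^(k+2)) = 1 from ?_]
    · exact Matrix.diagonal_one
    · funext i
      fin_cases i <;>
        simp [Pi.pow_apply, mul_pow, hμN, hωN, hω2N])
  have hLn : L^n = 1 := Units.ext (by
    rw [Units.val_pow_eq_pow_val, hL, hLm, Matrix.diagonal_pow, Units.val_one]
    rw [show (![1, ν, ν⁻¹] : Fin 3 → ℂ) ^ n = 1 from ?_]
    · exact Matrix.diagonal_one
    · funext i
      fin_cases i <;> simp [Pi.pow_apply, hνn, inv_pow])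
  have hL2n : L2^n = 1 := Units.ext (by
    rw [Units.val_pow_eq_pow_val, hL2v, Matrix.diagonal_pow, Units.val_one]
    rw [show (![ν, ν⁻¹, 1] : Fin 3 → ℂ) ^ n = 1 from ?_]
    · exact Matrix.diagonal_one
    · funext i
      fin_cases i <;> simp [Pi.pow_apply, hνn, inv_pow])
  have hdcomm : ∀ (A B : GL (Fin 3) ℂ) (v w : Fin 3 → ℂ), A.val = Matrix.diagonal v →
      B.val = Matrix.diagonal w → Commute A B := by
    intro A B v w hA hB
    have : A * B = B * A := Units.ext (by
      rw [Units.val_mul, Units.val_mul, hA, hB, Matrix.diagonal_mul_diagonal,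
        Matrix.diagonal_mul_diagonal]
      apply congrArg Matrix.diagonal
      funext i
      exact mul_comm _ _)
    exact this
  have cYL : Commute Y L := hdcomm _ _ _ _ (hY.trans hYm) (hL.trans hLm)
  have cYL2 : Commute Y L2 := hdcomm _ _ _ _ (hY.trans hYm) hL2v
  have cLL2 : Commute L L2 := hdcomm _ _ _ _ (hL.trans hLm) hL2v
  have hLL2L3 : L * L2 * L3 = 1 := Units.ext (by
    rw [Units.val_mul, Units.val_mul, hL, hLm, hL2v, hL3v, Matrix.diagonal_mul_diagonal,
      Matrix.diagonal_mul_diagonal, Units.val_one]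
    rw [show (fun i => (fun j => (![1,ν,ν⁻¹] : Fin 3 → ℂ) j * (![ν,ν⁻¹,1] : Fin 3 → ℂ) j) i
        * (![ν⁻¹,1,ν] : Fin 3 → ℂ) i) = (1 : Fin 3 → ℂ) from ?_]
    · exact Matrix.diagonal_one
    · funext i
      fin_cases i <;> simp [mul_inv_cancel₀ hν0, inv_mul_cancel₀ hν0])
  -- conjugation on integer powers
  have hcY : ∀ a : ℤ, E * Y^a * E⁻¹ = Y^(((3^(k+1)+1 : ℕ) : ℤ) * a) := by
    intro a
    have h0 : E * Y * E⁻¹ = Y^(3^(k+1)+1 : ℕ) := by rw [hEY, mul_inv_cancel_right]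
    rw [aux_conj h0 a, ← zpow_natCast Y (3^(k+1)+1 : ℕ), ← _root_.zpow_mul]
  have hcL : ∀ b : ℤ, E * L^b * E⁻¹ = L2^b := fun b =>
    aux_conj (by rw [hEL, mul_inv_cancel_right]) b
  have hcL2 : ∀ c : ℤ, E * L2^c * E⁻¹ = L3^c := fun c =>
    aux_conj (by rw [hEL2, mul_inv_cancel_right]) c
  have hL3z : ∀ c : ℤ, L3^c = L^(-c) * L2^(-c) := by
    intro c
    have h1 : L3 = (L * L2)⁻¹ := eq_inv_of_mul_eq_one_right hLL2L3
    rw [h1, _root_.inv_zpow, ← _root_.zpow_neg, cLL2.mul_zpow]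
  -- the D normal form
  set D : ℤ → ℤ → ℤ → GL (Fin 3) ℂ := fun a b c => Y^a * L^b * L2^c with hDdef
  have hDapp : ∀ a b c : ℤ, D a b c = Y^a * L^b * L2^c := fun _ _ _ => rfl
  have DmulD : ∀ a b c x y z : ℤ, D a b c * D x y z = D (a+x) (b+y) (c+z) := by
    intro a b c x y z
    rw [hDapp, hDapp, hDapp]
    exact aux_D_mul cYL cYL2 cLL2 a b c x y z
  have hDinv : ∀ a b c : ℤ, (D a b c)⁻¹ = D (-a) (-b) (-c) := by
    intro a b c
    rw [hDapp, hDapp]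
    exact aux_D_inv cYL cYL2 cLL2 a b c
  have conj0 : ∀ a b c : ℤ, E * D a b c = D (((3^(k+1)+1 : ℕ) : ℤ)*a) (-c) (b - c) * E := by
    intro a b c
    have key : E * D a b c * E⁻¹ = D (((3^(k+1)+1 : ℕ) : ℤ)*a) (-c) (b-c) := by
      rw [hDapp, hDapp]
      have expand : E * (Y^a * L^b * L2^c) * E⁻¹
          = (E*Y^a*E⁻¹) * (E*L^b*E⁻¹) * (E*L2^c*E⁻¹) := by group
      rw [expand, hcY, hcL, hcL2, hL3z]
      rw [mul_assoc, aux_lcomm ((cLL2.zpow_zpow (-c) b).symm), ← _root_.zpow_add, ← mul_assoc,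
        ← sub_eq_add_neg]
    calc E * D a b c = (E * D a b c * E⁻¹) * E := by group
      _ = _ := by rw [key]
  have pushN : ∀ (e : ℕ) (a b c : ℤ), ∃ x y z, E^e * D a b c = D x y z * E^e := by
    intro e
    induction e with
    | zero => exact fun a b c => ⟨a, b, c, by simp⟩
    | succ e ih =>
      intro a b c
      obtain ⟨x, y, z, hxyz⟩ := ih (((3^(k+1)+1 : ℕ) : ℤ)*a) (-c) (b-c)
      refine ⟨x, y, z, ?_⟩
      rw [pow_succ, mul_assoc, conj0, ← mul_assoc, hxyz, mul_assoc, ← pow_succ]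
  have D000 : D 0 0 0 = 1 := by rw [hDapp]; simp
  set Ssub : Subgroup (GL (Fin 3) ℂ) :=
    { carrier := {M | ∃ a b c : ℤ, ∃ e : ℕ, M = D a b c * E^e}
      one_mem' := ⟨0, 0, 0, 0, by rw [D000]; simp⟩
      mul_mem' := by
        rintro M1 M2 ⟨a,b,c,e,rfl⟩ ⟨x,y,z,f,rfl⟩
        obtain ⟨x',y',z',hp⟩ := pushN e x y z
        refine ⟨a+x', b+y', c+z', e+f, ?_⟩
        calc D a b c * E^e * (D x y z * E^f)
            = D a b c * (E^e * D x y z) * E^f := by group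
          _ = D a b c * (D x' y' z' * E^e) * E^f := by rw [hp]
          _ = (D a b c * D x' y' z') * (E^e * E^f) := by group
          _ = D (a+x') (b+y') (c+z') * E^(e+f) := by rw [DmulD, pow_add]
      inv_mem' := by
        rintro M ⟨a,b,c,e,rfl⟩
        obtain ⟨x,y,z,hp⟩ := pushN (2*e) (-a) (-b) (-c)
        refine ⟨x, y, z, 2*e, ?_⟩
        have hEinv : (E^e)⁻¹ = E^(2*e) := by
          apply inv_eq_of_mul_eq_one_right
          rw [← pow_add, show e + 2*e = 3*e from by ring, pow_mul, hE3, one_pow]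
        rw [_root_.mul_inv_rev, hEinv, hDinv]
        exact hp } with hSdef
  have hmemS : ∀ (M : GL (Fin 3) ℂ), M ∈ Ssub ↔ ∃ a b c : ℤ, ∃ e : ℕ, M = D a b c * E^e :=
    fun M => Iff.rfl
  -- closure equals Ssub
  have hEc : E ∈ Subgroup.closure ({E, L, Y} : Set (GL (Fin 3) ℂ)) :=
    Subgroup.subset_closure (by simp)
  have hLc : L ∈ Subgroup.closure ({E, L, Y} : Set (GL (Fin 3) ℂ)) :=
    Subgroup.subset_closure (by simp)
  have hYc : Y ∈ Subgroup.closure ({E, L, Y} : Set (GL (Fin 3) ℂ)) :=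
    Subgroup.subset_closure (by simp)
  have hL2c : L2 ∈ Subgroup.closure ({E, L, Y} : Set (GL (Fin 3) ℂ)) := by
    have h1 : E * L * E⁻¹ = L2 := by rw [hEL, mul_inv_cancel_right]
    rw [← h1]
    exact mul_mem (mul_mem hEc hLc) (inv_mem hEc)
  have hclos : Subgroup.closure ({E, L, Y} : Set (GL (Fin 3) ℂ)) = Ssub := by
    apply le_antisymm
    · rw [Subgroup.closure_le]
      rintro s hs
      simp only [Set.mem_insert_iff, Set.mem_singleton_iff] at hs
      rcases hs with rfl | rfl | rfl
      · exact ⟨0, 0, 0, 1, by rw [D000]; simp⟩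
      · exact ⟨0, 1, 0, 0, by rw [hDapp]; simp⟩
      · exact ⟨1, 0, 0, 0, by rw [hDapp]; simp⟩
    · rintro M ⟨a,b,c,e,rfl⟩
      refine mul_mem ?_ (pow_mem hEc e)
      rw [hDapp]
      exact mul_mem (mul_mem (zpow_mem hYc a) (zpow_mem hLc b)) (zpow_mem hL2c c)
  rw [hclos]
  -- cardinality via explicit bijection
  haveI : NeZero n := ⟨hn.ne'⟩
  haveI : NeZero ((3:ℕ)^(k+2)) := ⟨by positivity⟩
  have hcop : Nat.Coprime ((3:ℕ)^(k+2)) n :=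
    Nat.Coprime.pow_left _ ((Nat.prime_three.coprime_iff_not_dvd).mpr hn3)
  have hval : ∀ (a b c e : ℕ), ((D (a:ℤ) (b:ℤ) (c:ℤ) * E^e).val : Matrix (Fin 3) (Fin 3) ℂ)
      = Matrix.diagonal ![μ^a * 1^b * ν^c, (μ*ω)^a * ν^b * (ν⁻¹)^c, (μ*ω^2)^a * (ν⁻¹)^b * 1^c]
        * Ematrix^e := by
    intro a b c e
    rw [hDapp]
    rw [zpow_natCast, zpow_natCast, zpow_natCast]
    rw [Units.val_mul, Units.val_mul, Units.val_mul, Units.val_pow_eq_pow_val,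
      Units.val_pow_eq_pow_val, Units.val_pow_eq_pow_val, Units.val_pow_eq_pow_val,
      hY, hYm, hL, hLm, hL2v, hE, Matrix.diagonal_pow, Matrix.diagonal_pow, Matrix.diagonal_pow,
      Matrix.diagonal_mul_diagonal, Matrix.diagonal_mul_diagonal]
    congr 1
    apply congrArg Matrix.diagonal
    funext i
    fin_cases i <;> simp [Pi.pow_apply]
  have hne0 : ∀ a b c : ℕ, (μ^a * 1^b * ν^c : ℂ) ≠ 0 := fun a b c =>
    mul_ne_zero (mul_ne_zero (pow_ne_zero _ hμ0) (pow_ne_zero _ one_ne_zero))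
      (pow_ne_zero _ hν0)
  have hμroot : ∀ a : ℕ, (μ^a : ℂ)^((3:ℕ)^(k+2)) = 1 := fun a => by
    rw [← pow_mul, mul_comm, pow_mul, hμN, one_pow]
  have hνroot : ∀ c : ℕ, (ν^c : ℂ)^n = 1 := fun c => by
    rw [← pow_mul, mul_comm, pow_mul, hνn, one_pow]
  have hbij : Function.Bijective
      (fun p : ZMod (3^(k+2)) × ZMod n × ZMod n × ZMod 3 =>
        (⟨D (p.1.val : ℤ) (p.2.1.val : ℤ) (p.2.2.1.val : ℤ) * E^(p.2.2.2.val),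
          (hmemS _).mpr ⟨_, _, _, _, rfl⟩⟩ : ↥Ssub)) := by
    constructor
    · rintro ⟨a1, b1, c1, e1⟩ ⟨a2, b2, c2, e2⟩ hpq
      rw [Subtype.mk.injEq] at hpq
      have Hm := congrArg Units.val hpq
      rw [hval, hval] at Hm
      obtain ⟨hee, hvv⟩ := aux_cancelE _ _ _ _ (ZMod.val_lt e1) (ZMod.val_lt e2)
        (hne0 _ _ _) Hm
      have h0 := congrFun hvv 0
      have h1 := congrFun hvv 1
      simp only [Matrix.cons_val_zero, Matrix.cons_val_one, Matrix.head_cons, one_pow,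
        mul_one] at h0 h1
      obtain ⟨hμeq, hνeq⟩ := aux_split ((3:ℕ)^(k+2)) n (by positivity) hn.ne' hcop
        (hμroot a1.val) (hμroot a2.val) (hνroot c1.val) (hνroot c2.val) h0
      have ha : a1 = a2 := ZMod.val_injective _
        (hμ.pow_inj (ZMod.val_lt a1) (ZMod.val_lt a2) hμeq)
      have hc : c1 = c2 := ZMod.val_injective _
        (hν.pow_inj (ZMod.val_lt c1) (ZMod.val_lt c2) hνeq)
      rw [ha, hc] at h1
      have h1' := mul_right_cancel₀ (pow_ne_zero _ (inv_ne_zero hν0)) h1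
      have h1'' := mul_left_cancel₀ (pow_ne_zero _ (mul_ne_zero hμ0 hω0)) h1'
      have hb : b1 = b2 := ZMod.val_injective _
        (hν.pow_inj (ZMod.val_lt b1) (ZMod.val_lt b2) h1'')
      have he : e1 = e2 := ZMod.val_injective _ hee
      exact Prod.ext ha (Prod.ext hb (Prod.ext hc he))
    · rintro ⟨M, a, b, c, e, rfl⟩
      refine ⟨⟨(a : ZMod (3^(k+2))), (b : ZMod n), (c : ZMod n), (e : ZMod 3)⟩, ?_⟩
      apply Subtype.ext
      show D _ _ _ * E ^ _ = D a b c * E^e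
      have hYa : Y^(((a : ZMod ((3:ℕ)^(k+2))).val : ℤ)) = Y^a := by
        rw [zpow_natCast, ← aux_zpow_val Y _ hYN a]
      have hLb : L^(((b : ZMod n).val : ℤ)) = L^b := by
        rw [zpow_natCast, ← aux_zpow_val L _ hLn b]
      have hL2c' : L2^(((c : ZMod n).val : ℤ)) = L2^c := by
        rw [zpow_natCast, ← aux_zpow_val L2 _ hL2n c]
      have hEe : E^((e : ZMod 3).val) = E^e := by
        rw [ZMod.val_natCast, ← aux_pow_mod E 3 hE3 e]
      rw [hDapp, hDapp, hYa, hLb, hL2c', hEe]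
  have hcard := Nat.card_eq_of_bijective _ hbij
  rw [← hcard]
  simp only [Nat.card_prod, Nat.card_zmod]
  ring
end

section
/- Let n be a positive integer divisible by 3 and let m ≥ 2 be an integer. Then the subgroup of GL(3,ℂ) generated by E, L_n and Y₁(m) (this is the group Z(n, m)) has order 3^m·n². -/
open Matrix

/-! ### Auxiliary machinery -/

noncomputable def zetaC (N : ℕ) : ℂ := Complex.exp (2 * (Real.pi : ℂ) * Complex.I / (N : ℂ))

lemma zetaC_ne_zero (N : ℕ) : zetaC N ≠ 0 := Complex.exp_ne_zero _

lemma zpow_zetaC_ne_zero (N : ℕ) (a : ℤ) : zetaC N ^ a ≠ 0 := zpow_ne_zero _ (zetaC_ne_zero N)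

noncomputable def dMat (N : ℕ) (v : ℤ × ℤ × ℤ) : Matrix (Fin 3) (Fin 3) ℂ :=
  !![zetaC N ^ v.1, 0, 0; 0, zetaC N ^ v.2.1, 0; 0, 0, zetaC N ^ v.2.2]

lemma dMat_mul (N : ℕ) (u v : ℤ × ℤ × ℤ) : dMat N u * dMat N v = dMat N (u + v) := by
  simp [dMat, Matrix.mul_fin_three, zpow_add₀ (zetaC_ne_zero N), Prod.fst_add, Prod.snd_add]

lemma dMat_zero (N : ℕ) : dMat N 0 = 1 := by
  simp [dMat, Matrix.one_fin_three]

lemma E_mul_dMat (N : ℕ) (v : ℤ × ℤ × ℤ) :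
    Ematrix * dMat N v = dMat N (v.2.1, v.2.2, v.1) * Ematrix := by
  simp [dMat, Ematrix, Matrix.mul_fin_three]

lemma Ematrix_cube : Ematrix * (Ematrix * Ematrix) = 1 := by
  simp [Ematrix, Matrix.mul_fin_three, Matrix.one_fin_three]

noncomputable def dU (N : ℕ) (v : ℤ × ℤ × ℤ) : GL (Fin 3) ℂ :=
  ⟨dMat N v, dMat N (-v), by rw [dMat_mul, add_neg_cancel, dMat_zero],
    by rw [dMat_mul, neg_add_cancel, dMat_zero]⟩

lemma dU_val (N : ℕ) (v : ℤ × ℤ × ℤ) : (dU N v).val = dMat N v := rfl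

lemma dU_mul (N : ℕ) (u v : ℤ × ℤ × ℤ) : dU N u * dU N v = dU N (u + v) :=
  Units.ext (dMat_mul N u v)

lemma dU_zero (N : ℕ) : dU N 0 = 1 := Units.ext (dMat_zero N)

lemma dU_inv (N : ℕ) (v : ℤ × ℤ × ℤ) : (dU N v)⁻¹ = dU N (-v) := by
  rw [inv_eq_iff_mul_eq_one, dU_mul, add_neg_cancel, dU_zero]

lemma dU_nsmul (N : ℕ) (v : ℤ × ℤ × ℤ) (k : ℕ) : dU N v ^ k = dU N ((k : ℤ) • v) := by
  induction k with
  | zero => simp [dU_zero]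
  | succ k ih =>
      rw [pow_succ, ih, dU_mul]
      congr 1
      push_cast
      module

lemma dU_zsmul (N : ℕ) (v : ℤ × ℤ × ℤ) (k : ℤ) : dU N v ^ k = dU N (k • v) := by
  cases k with
  | ofNat k => rw [Int.ofNat_eq_coe, zpow_natCast, dU_nsmul]
  | negSucc k =>
      rw [zpow_negSucc, dU_nsmul, dU_inv]
      congr 1
      rw [Int.negSucc_eq]
      push_cast
      module

lemma diagonal_fin_three (a b c : ℂ) :
    Matrix.diagonal ![a, b, c] = !![a, 0, 0; 0, b, 0; 0, 0, c] := by
  ext i j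
  fin_cases i <;> fin_cases j <;> simp [Matrix.diagonal] <;> rfl

lemma zetaC_pow (N a b : ℕ) (ha : a ≠ 0) (hb : b ≠ 0) (h : N = a * b) :
    zetaC N ^ (b : ℤ) = Complex.exp (2 * (Real.pi : ℂ) * Complex.I / (a : ℂ)) := by
  rw [zetaC, zpow_natCast, ← Complex.exp_nat_mul]
  congr 1
  have haC : (a : ℂ) ≠ 0 := Nat.cast_ne_zero.mpr ha
  have hNC : (N : ℂ) ≠ 0 := Nat.cast_ne_zero.mpr (by simp [h, ha, hb])
  field_simp
  rw [h]
  push_cast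
  ring

lemma zetaC_congr (N : ℕ) (hN : N ≠ 0) (a b : ℤ) (h : (N : ℤ) ∣ a - b) :
    zetaC N ^ a = zetaC N ^ b := by
  have hprim := Complex.isPrimitiveRoot_exp N hN
  have h1 : zetaC N ^ (a - b) = 1 := (hprim.zpow_eq_one_iff_dvd (a - b)).mpr h
  have hz : zetaC N ≠ 0 := Complex.exp_ne_zero _
  rw [zpow_sub₀ hz, div_eq_one_iff_eq (zpow_ne_zero _ hz)] at h1
  exact h1

lemma zetaC_inj (N : ℕ) (hN : N ≠ 0) (a b : ℤ) (h : zetaC N ^ a = zetaC N ^ b) :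
    (N : ℤ) ∣ a - b := by
  have hprim := Complex.isPrimitiveRoot_exp N hN
  have hz : zetaC N ≠ 0 := Complex.exp_ne_zero _
  refine (hprim.zpow_eq_one_iff_dvd (a - b)).mp ?_
  show zetaC N ^ (a - b) = 1
  rw [zpow_sub₀ hz, h, div_self (zpow_ne_zero _ hz)]

lemma dU_congr (N : ℕ) (hN : N ≠ 0) (u v : ℤ × ℤ × ℤ) (h1 : (N : ℤ) ∣ u.1 - v.1)
    (h2 : (N : ℤ) ∣ u.2.1 - v.2.1) (h3 : (N : ℤ) ∣ u.2.2 - v.2.2) : dU N u = dU N v := by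
  apply Units.ext
  show dMat N u = dMat N v
  unfold dMat
  rw [zetaC_congr N hN _ _ h1, zetaC_congr N hN _ _ h2, zetaC_congr N hN _ _ h3]

/-- `Tv P Q R (z, x, y)` is the exponent vector of `Y^z L^x M^y`. -/
def Tv (P Q R : ℤ) (w : ℤ × ℤ × ℤ) : ℤ × ℤ × ℤ :=
  (Q * w.1 + P * w.2.2, Q * w.1 + R * w.1 + P * w.2.1 - P * w.2.2,
    Q * w.1 + 2 * R * w.1 - P * w.2.1)

def gv (n' : ℤ) (w : ℤ × ℤ × ℤ) : ℤ × ℤ × ℤ :=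
  (w.1, n' * w.1 - w.2.1 + w.2.2, 2 * n' * w.1 - w.2.1)

lemma Tv_add (P Q R : ℤ) (w w' : ℤ × ℤ × ℤ) :
    Tv P Q R w + Tv P Q R w' = Tv P Q R (w + w') := by
  unfold Tv
  refine Prod.ext (by simp; ring) (Prod.ext (by simp; ring) (by simp; ring))

lemma Tv_zero (P Q R : ℤ) : Tv P Q R 0 = 0 := by
  unfold Tv; simp

lemma Tv_neg (P Q R : ℤ) (w : ℤ × ℤ × ℤ) : -Tv P Q R w = Tv P Q R (-w) := by
  unfold Tv
  refine Prod.ext (by simp; ring) (Prod.ext (by simp; ring) (by simp; ring))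

lemma Tv_decomp (P Q R : ℤ) (w : ℤ × ℤ × ℤ) :
    Tv P Q R w = w.1 • Tv P Q R (1, 0, 0) + w.2.1 • Tv P Q R (0, 1, 0)
      + w.2.2 • Tv P Q R (0, 0, 1) := by
  unfold Tv
  refine Prod.ext (by simp [smul_eq_mul]; ring)
    (Prod.ext (by simp [smul_eq_mul]; ring) (by simp [smul_eq_mul]; ring))

lemma Tv_one00 (P Q R : ℤ) : Tv P Q R (1, 0, 0) = (Q, Q + R, Q + 2 * R) := by
  unfold Tv; norm_num

lemma Tv_010 (P Q R : ℤ) : Tv P Q R (0, 1, 0) = (0, P, -P) := by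
  unfold Tv; norm_num

lemma Tv_001 (P Q R : ℤ) : Tv P Q R (0, 0, 1) = (P, -P, 0) := by
  unfold Tv; norm_num

lemma rho_Tv (P Q R n' : ℤ) (hR : R = P * n') (w : ℤ × ℤ × ℤ) :
    ((Tv P Q R w).2.2, (Tv P Q R w).1, (Tv P Q R w).2.1) = Tv P Q R (gv n' w) := by
  unfold Tv gv
  subst hR
  refine Prod.ext (by simp; ring) (Prod.ext (by simp; ring) (by simp; ring))

lemma pattern (N : ℕ) (v v' : ℤ × ℤ × ℤ) (ea eb : ℕ) (hea : ea < 3) (heb : eb < 3)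
    (h : Ematrix ^ ea * dMat N v = Ematrix ^ eb * dMat N v') :
    ea = eb ∧ zetaC N ^ v.1 = zetaC N ^ v'.1 ∧ zetaC N ^ v.2.1 = zetaC N ^ v'.2.1 ∧
      zetaC N ^ v.2.2 = zetaC N ^ v'.2.2 := by
  rw [← Matrix.ext_iff] at h
  interval_cases ea <;> interval_cases eb
  all_goals simp only [pow_zero, pow_one, pow_two, one_mul, Ematrix, dMat,
    Matrix.mul_fin_three] at h
  · refine ⟨rfl, ?_, ?_, ?_⟩
    · have e := h 0 0; norm_num at e; exact e
    · have e := h 1 1; norm_num at e; exact e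
    · have e := h 2 2; norm_num at e; exact e
  · have e := h 0 0; norm_num at e; exact absurd e (zpow_zetaC_ne_zero N _)
  · have e := h 0 0; norm_num at e; exact absurd e (zpow_zetaC_ne_zero N _)
  · have e := h 0 0; norm_num at e; exact absurd e.symm (zpow_zetaC_ne_zero N _)
  · refine ⟨rfl, ?_, ?_, ?_⟩
    · have e := h 2 0; norm_num at e; exact e
    · have e := h 0 1; norm_num at e; exact e
    · have e := h 1 2; norm_num at e; exact e
  · have e := h 0 1; norm_num at e; exact absurd e (zpow_zetaC_ne_zero N _)
  · have e := h 0 0; norm_num at e; exact absurd e.symm (zpow_zetaC_ne_zero N _)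
  · have e := h 0 1; norm_num at e; exact absurd e.symm (zpow_zetaC_ne_zero N _)
  · refine ⟨rfl, ?_, ?_, ?_⟩
    · have e := h 1 0; norm_num at e; exact e
    · have e := h 2 1; norm_num at e; exact e
    · have e := h 0 2; norm_num at e; exact e

section Main

variable (N : ℕ) (P Q R n' : ℤ) (E : GL (Fin 3) ℂ) (hE : E.val = Ematrix)

include hE

lemma E_cube : E ^ 3 = 1 := by
  apply Units.ext
  show E.val ^ 3 = 1
  rw [hE, pow_succ, pow_two, mul_assoc, Ematrix_cube]

lemma dU_mul_E (v : ℤ × ℤ × ℤ) :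
    dU N v * E = E * dU N (v.2.2, v.1, v.2.1) := by
  apply Units.ext
  show dMat N v * E.val = E.val * dMat N (v.2.2, v.1, v.2.1)
  rw [hE, E_mul_dMat]

lemma dUT_mul_Epow (hR : R = P * n') (k : ℕ) (w : ℤ × ℤ × ℤ) :
    dU N (Tv P Q R w) * E ^ k = E ^ k * dU N (Tv P Q R ((gv n')^[k] w)) := by
  induction k with
  | zero => simp
  | succ k ih =>
      rw [pow_succ, ← mul_assoc, ih, mul_assoc, dU_mul_E N E hE,
        rho_Tv P Q R n' hR, ← mul_assoc, ← pow_succ, Function.iterate_succ_apply']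

end Main

/-! ### The main theorem -/

/-- The group `Z(n, m)`, generated by `E`, `L_n` and `Y₁(m)` inside `GL(3,ℂ)`,
has order `3^m·n²`. -/
theorem Znm_order (n : ℕ) (hn : 0 < n) (hn3 : 3 ∣ n)
    (m : ℕ) (hm : 2 ≤ m)
    (E L Y : GL (Fin 3) ℂ)
    (hE : E.val = Ematrix) (hL : L.val = Lmatrix n) (hY : Y.val = Y1matrix m) :
    Nat.card ↥(Subgroup.closure ({E, L, Y} : Set (GL (Fin 3) ℂ)))
      = 3 ^ m * n ^ 2 := by
  obtain ⟨k, rfl⟩ : ∃ k, m = k + 2 := ⟨m - 2, by omega⟩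
  obtain ⟨n', rfl⟩ := hn3
  have hn' : 0 < n' := by omega
  haveI : NeZero (3 * n') := ⟨by omega⟩
  haveI : NeZero (3 ^ (k + 1)) := ⟨by positivity⟩
  set m := k + 2 with hmdef
  set N : ℕ := 3 ^ m * (3 * n') with hN
  have hNne : N ≠ 0 := by positivity
  set t : ℤ := 3 ^ k with ht
  have ht0 : (0 : ℤ) < t := by positivity
  set P : ℤ := 9 * t with hP
  set Q : ℤ := 3 * n' with hQ
  set R : ℤ := 9 * t * n' with hR
  have hNZ : (N : ℤ) = 27 * t * n' := by
    rw [hN, hmdef]; push_cast [pow_succ]; ring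
  have hRP : R = P * (n' : ℤ) := by rw [hR, hP]
  have hM1 : ((3 ^ (k + 1) : ℕ) : ℤ) = 3 * t := by push_cast [pow_succ]; ring
  -- identification of the generators
  have hLd : L = dU N (0, P, -P) := by
    apply Units.ext
    rw [hL, dU_val]
    have h1 : zetaC N ^ P
        = Complex.exp (2 * (Real.pi : ℂ) * Complex.I / ((3 * n' : ℕ) : ℂ)) := by
      have h0 := zetaC_pow N (3 * n') (3 ^ m) (by omega) (by positivity) (by rw [hN]; ring)
      rw [← h0]
      congr 1
      rw [hP, ht, hmdef]; push_cast [pow_succ]; ring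
    unfold Lmatrix dMat
    rw [diagonal_fin_three, _root_.zpow_neg, h1, zpow_zero]
  have hzQ : zetaC N ^ Q = Complex.exp (2 * (Real.pi : ℂ) * Complex.I / ((3 : ℂ) ^ m)) := by
    have h0 := zetaC_pow N (3 ^ m) (3 * n') (by positivity) (by omega) hN
    have e1 : ((3 * n' : ℕ) : ℤ) = Q := by rw [hQ]; push_cast; ring
    have e2 : ((3 ^ m : ℕ) : ℂ) = (3 : ℂ) ^ m := by push_cast; ring
    rw [e1, e2] at h0; exact h0
  have hzR : zetaC N ^ R = Complex.exp (2 * (Real.pi : ℂ) * Complex.I / 3) := by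
    have h0 := zetaC_pow N 3 (3 ^ m * n') (by omega) (by positivity) (by rw [hN]; ring)
    have e1 : ((3 ^ m * n' : ℕ) : ℤ) = R := by rw [hR, ht, hmdef]; push_cast [pow_succ]; ring
    have e2 : ((3 : ℕ) : ℂ) = 3 := by norm_num
    rw [e1, e2] at h0; exact h0
  have hzne := zetaC_ne_zero N
  have hzQR : zetaC N ^ (Q + R)
      = Complex.exp (2 * (Real.pi : ℂ) * Complex.I / ((3 : ℂ) ^ m)) *
        Complex.exp (2 * (Real.pi : ℂ) * Complex.I / 3) := by
    rw [zpow_add₀ hzne, hzQ, hzR]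
  have hzQ2R : zetaC N ^ (Q + 2 * R)
      = Complex.exp (2 * (Real.pi : ℂ) * Complex.I / ((3 : ℂ) ^ m)) *
        Complex.exp (2 * (Real.pi : ℂ) * Complex.I / 3) ^ 2 := by
    rw [show Q + 2 * R = Q + R + R by ring, zpow_add₀ hzne, hzQR]
    rw [hzR]; ring
  have hYd : Y = dU N (Q, Q + R, Q + 2 * R) := by
    apply Units.ext
    rw [hY, dU_val]
    unfold Y1matrix dMat
    rw [diagonal_fin_three]
    rw [show (Q, Q + R, Q + 2 * R).1 = Q from rfl]
    rw [hzQ, hzQR, hzQ2R]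
  -- the subgroup
  set C : Set (GL (Fin 3) ℂ) :=
    {U | ∃ (j : ℕ) (w : ℤ × ℤ × ℤ), U = E ^ j * dU N (Tv P Q R w)} with hC
  have honeC : (1 : GL (Fin 3) ℂ) ∈ C := ⟨0, 0, by rw [Tv_zero, dU_zero, pow_zero, one_mul]⟩
  have hmulC : ∀ {a b : GL (Fin 3) ℂ}, a ∈ C → b ∈ C → a * b ∈ C := by
    rintro a b ⟨j, w, rfl⟩ ⟨j', w', rfl⟩
    refine ⟨j + j', (gv (n' : ℤ))^[j'] w + w', ?_⟩
    rw [mul_assoc, ← mul_assoc (dU N (Tv P Q R w)),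
      dUT_mul_Epow N P Q R (n' : ℤ) E hE hRP j' w, mul_assoc, dU_mul, Tv_add, pow_add,
      mul_assoc]
  have hE3 := E_cube E hE
  have hEinv : E⁻¹ = E ^ 2 := by
    refine inv_eq_of_mul_eq_one_left ?_
    rw [← pow_succ]
    exact hE3
  have hinvC : ∀ {a : GL (Fin 3) ℂ}, a ∈ C → a⁻¹ ∈ C := by
    rintro a ⟨j, w, rfl⟩
    refine ⟨2 * j, (gv (n' : ℤ))^[2 * j] (-w), ?_⟩
    rw [_root_.mul_inv_rev, dU_inv, Tv_neg, ← inv_pow, hEinv, ← pow_mul,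
      dUT_mul_Epow N P Q R (n' : ℤ) E hE hRP (2 * j) (-w)]
  let S : Subgroup (GL (Fin 3) ℂ) :=
    { carrier := C, mul_mem' := hmulC, one_mem' := honeC, inv_mem' := hinvC }
  -- closure = S
  have hEC : E ∈ C := ⟨1, 0, by rw [Tv_zero, dU_zero, pow_one, mul_one]⟩
  have hLC : L ∈ C := ⟨0, (0, 1, 0), by rw [Tv_010, pow_zero, one_mul, hLd]⟩
  have hYC : Y ∈ C := ⟨0, (1, 0, 0), by rw [Tv_one00, pow_zero, one_mul, hYd]⟩
  have hEc : E ∈ Subgroup.closure ({E, L, Y} : Set (GL (Fin 3) ℂ)) :=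
    Subgroup.subset_closure (by simp)
  have hLc : L ∈ Subgroup.closure ({E, L, Y} : Set (GL (Fin 3) ℂ)) :=
    Subgroup.subset_closure (by simp)
  have hYc : Y ∈ Subgroup.closure ({E, L, Y} : Set (GL (Fin 3) ℂ)) :=
    Subgroup.subset_closure (by simp)
  have hMc : dU N (Tv P Q R (0, 0, 1)) ∈ Subgroup.closure ({E, L, Y} : Set (GL (Fin 3) ℂ)) := by
    have h1 : dU N (P, -P, 0) * E = E * dU N (0, P, -P) := dU_mul_E N E hE (P, -P, 0)
    have h2 : dU N (Tv P Q R (0, 0, 1)) = E * L * E⁻¹ := by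
      rw [Tv_001, hLd, eq_mul_inv_iff_mul_eq]
      exact h1
    rw [h2]
    exact mul_mem (mul_mem hEc hLc) (inv_mem hEc)
  have hclosure : Subgroup.closure ({E, L, Y} : Set (GL (Fin 3) ℂ)) = S := by
    apply le_antisymm
    · rw [Subgroup.closure_le]
      intro x hx
      simp only [Set.mem_insert_iff, Set.mem_singleton_iff] at hx
      rcases hx with rfl | rfl | rfl
      · exact hEC
      · exact hLC
      · exact hYC
    · intro U hU
      obtain ⟨j, w, rfl⟩ := hU
      refine mul_mem (pow_mem hEc j) ?_
      rw [Tv_decomp P Q R w, ← dU_mul, ← dU_mul, ← dU_zsmul, ← dU_zsmul, ← dU_zsmul]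
      refine mul_mem (mul_mem (zpow_mem ?_ _) (zpow_mem ?_ _)) (zpow_mem hMc _)
      · rw [Tv_one00, ← hYd]; exact hYc
      · rw [Tv_010, ← hLd]; exact hLc
  -- the counting map
  set F : ZMod 3 × ZMod (3 ^ (k + 1)) × ZMod (3 * n') × ZMod (3 * n') → GL (Fin 3) ℂ :=
    fun p => E ^ p.1.val *
      dU N (Tv P Q R ((p.2.1.val : ℤ), (p.2.2.1.val : ℤ), (p.2.2.2.val : ℤ))) with hF
  have hrange : C = Set.range F := by
    apply Set.eq_of_subset_of_subset
    · rintro U ⟨j, ⟨z, x, y⟩, rfl⟩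
      -- reduce the E-exponent
      have hj : E ^ j = E ^ ((j : ZMod 3)).val := by
        rw [ZMod.val_natCast]
        conv_lhs => rw [← Nat.div_add_mod j 3]
        rw [pow_add, pow_mul, hE3, one_pow, one_mul]
      -- reduce the diagonal parameters
      set z₁ : ZMod (3 ^ (k + 1)) := ((z : ℤ) : ZMod (3 ^ (k + 1))) with hz₁
      have hdz : ((3 ^ (k + 1) : ℕ) : ℤ) ∣ z - (z₁.val : ℤ) := by
        rw [← ZMod.intCast_zmod_eq_zero_iff_dvd]
        push_cast
        rw [ZMod.natCast_rightInverse z₁, hz₁, sub_self]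
      rw [hM1] at hdz
      obtain ⟨qz, hqz⟩ := hdz
      set x₁ : ZMod (3 * n') := ((x + 2 * n' * qz : ℤ) : ZMod (3 * n')) with hx₁
      have hdx : ((3 * n' : ℕ) : ℤ) ∣ (x + 2 * n' * qz) - (x₁.val : ℤ) := by
        rw [← ZMod.intCast_zmod_eq_zero_iff_dvd]
        push_cast
        rw [ZMod.natCast_rightInverse x₁, hx₁]
        push_cast
        ring
      rw [show ((3 * n' : ℕ) : ℤ) = 3 * (n' : ℤ) by push_cast; ring] at hdx
      obtain ⟨xd, hxd⟩ := hdx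
      set y₁ : ZMod (3 * n') := ((y + n' * qz : ℤ) : ZMod (3 * n')) with hy₁
      have hdy : ((3 * n' : ℕ) : ℤ) ∣ (y + n' * qz) - (y₁.val : ℤ) := by
        rw [← ZMod.intCast_zmod_eq_zero_iff_dvd]
        push_cast
        rw [ZMod.natCast_rightInverse y₁, hy₁]
        push_cast
        ring
      rw [show ((3 * n' : ℕ) : ℤ) = 3 * (n' : ℤ) by push_cast; ring] at hdy
      obtain ⟨yd, hyd⟩ := hdy
      refine ⟨((j : ZMod 3), z₁, x₁, y₁), ?_⟩
      rw [hF]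
      simp only
      rw [← hj]
      congr 1
      refine dU_congr N hNne _ _ ?_ ?_ ?_
      · simp only [Tv]
        rw [hNZ]
        refine ⟨-yd, ?_⟩
        linear_combination (-(3 * (n' : ℤ))) * hqz + (-(9 * t)) * hyd
      · simp only [Tv]
        rw [hNZ]
        refine ⟨-(t * qz + xd - yd), ?_⟩
        linear_combination (-(3 * (n' : ℤ) + 9 * t * n')) * hqz + (-(9 * t)) * hxd
          + (9 * t) * hyd
      · simp only [Tv]
        rw [hNZ]
        refine ⟨-(qz + 2 * t * qz - xd), ?_⟩
        linear_combination (-(3 * (n' : ℤ) + 18 * t * n')) * hqz + (9 * t) * hxd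
    · rintro _ ⟨p, rfl⟩
      exact ⟨p.1.val, ((p.2.1.val : ℤ), (p.2.2.1.val : ℤ), (p.2.2.2.val : ℤ)), rfl⟩
  -- injectivity of F
  have hFinj : Function.Injective F := by
    rintro ⟨e, z, x, y⟩ ⟨e', z', x', y'⟩ hq
    have hv := congrArg Units.val hq
    simp only [hF] at hv
    rw [Units.val_mul, Units.val_mul, Units.val_pow_eq_pow_val, Units.val_pow_eq_pow_val,
      hE, dU_val, dU_val] at hv
    obtain ⟨he, h1, h2, h3⟩ := pattern N _ _ _ _ (ZMod.val_lt e) (ZMod.val_lt e') hv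
    obtain ⟨a1, ha1⟩ := zetaC_inj N hNne _ _ h1
    obtain ⟨a2, ha2⟩ := zetaC_inj N hNne _ _ h2
    obtain ⟨a3, ha3⟩ := zetaC_inj N hNne _ _ h3
    simp only [Tv] at ha1 ha2 ha3
    rw [hNZ] at ha1 ha2 ha3
    have h9n : (9 * (n' : ℤ)) ≠ 0 := by positivity
    have h9t : (9 * t) ≠ 0 := by positivity
    have hzz : (z.val : ℤ) = (z'.val : ℤ) := by
      have hd : (z.val : ℤ) - (z'.val : ℤ)
          = 3 * t * (a1 + a2 + a3 - ((z.val : ℤ) - (z'.val : ℤ))) := by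
        apply mul_left_cancel₀ h9n
        linear_combination ha1 + ha2 + ha3
      have hb1 : (z.val : ℤ) < 3 * t := by
        rw [← hM1]; exact_mod_cast ZMod.val_lt z
      have hb2 : (z'.val : ℤ) < 3 * t := by
        rw [← hM1]; exact_mod_cast ZMod.val_lt z'
      have hb3 : (0 : ℤ) ≤ (z.val : ℤ) := Int.natCast_nonneg _
      have hb4 : (0 : ℤ) ≤ (z'.val : ℤ) := Int.natCast_nonneg _
      have h0 : (z.val : ℤ) - (z'.val : ℤ) = 0 :=
        Int.eq_zero_of_abs_lt_dvd ⟨_, hd⟩ (abs_sub_lt_iff.mpr ⟨by omega, by omega⟩)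
      omega
    have hyy : (y.val : ℤ) = (y'.val : ℤ) := by
      have hd : (y.val : ℤ) - (y'.val : ℤ) = 3 * (n' : ℤ) * a1 := by
        apply mul_left_cancel₀ h9t
        linear_combination ha1 - Q * hzz
      have hb1 : (y.val : ℤ) < 3 * (n' : ℤ) := by exact_mod_cast ZMod.val_lt y
      have hb2 : (y'.val : ℤ) < 3 * (n' : ℤ) := by exact_mod_cast ZMod.val_lt y'
      have hb3 : (0 : ℤ) ≤ (y.val : ℤ) := Int.natCast_nonneg _
      have hb4 : (0 : ℤ) ≤ (y'.val : ℤ) := Int.natCast_nonneg _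
      have h0 : (y.val : ℤ) - (y'.val : ℤ) = 0 :=
        Int.eq_zero_of_abs_lt_dvd ⟨_, hd⟩ (abs_sub_lt_iff.mpr ⟨by omega, by omega⟩)
      omega
    have hxx : (x.val : ℤ) = (x'.val : ℤ) := by
      have hd : (x.val : ℤ) - (x'.val : ℤ) = 3 * (n' : ℤ) * (-a3) := by
        apply mul_left_cancel₀ h9t
        linear_combination -ha3 + (Q + 2 * R) * hzz
      have hb1 : (x.val : ℤ) < 3 * (n' : ℤ) := by exact_mod_cast ZMod.val_lt x
      have hb2 : (x'.val : ℤ) < 3 * (n' : ℤ) := by exact_mod_cast ZMod.val_lt x'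
      have hb3 : (0 : ℤ) ≤ (x.val : ℤ) := Int.natCast_nonneg _
      have hb4 : (0 : ℤ) ≤ (x'.val : ℤ) := Int.natCast_nonneg _
      have h0 : (x.val : ℤ) - (x'.val : ℤ) = 0 :=
        Int.eq_zero_of_abs_lt_dvd ⟨_, hd⟩ (abs_sub_lt_iff.mpr ⟨by omega, by omega⟩)
      omega
    have heE : e = e' := ZMod.val_injective _ he
    have hzE : z = z' := ZMod.val_injective _ (by exact_mod_cast hzz)
    have hxE : x = x' := ZMod.val_injective _ (by exact_mod_cast hxx)
    have hyE : y = y' := ZMod.val_injective _ (by exact_mod_cast hyy)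
    rw [heE, hzE, hxE, hyE]
  -- conclusion
  have hcard1 : Nat.card ↥(Subgroup.closure ({E, L, Y} : Set (GL (Fin 3) ℂ)))
      = Nat.card ↥C := by rw [hclosure]; rfl
  rw [hcard1, hrange, Nat.card_congr (Equiv.ofInjective F hFinj).symm,
    Nat.card_prod, Nat.card_prod, Nat.card_prod, Nat.card_zmod, Nat.card_zmod,
    Nat.card_zmod]
  rw [hmdef]
  ring
end

section
/- Let n ≥ 2 be an integer and let G be the subgroup of GL(3,ℂ) generated by E, I and L_n (the group Δ(6n²)). Then the number of group homomorphisms from G to ℂˣ (equivalently, the number of inequivalent one-dimensional complex irreducible representations of G) is 2. -/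
open Matrix

/-- The matrix `I` with entries `I₀₂ = I₁₁ = I₂₀ = −1` and all other entries `0`. -/
noncomputable def Imatrix : Matrix (Fin 3) (Fin 3) ℂ := !![0, 0, -1; 0, -1, 0; -1, 0, 0]

/-- `g` is a monomial (generalized permutation) matrix with permutation `σ`. -/
def IsUMono (g : GL (Fin 3) ℂ) (σ : Equiv.Perm (Fin 3)) : Prop :=
  ∃ d : Fin 3 → ℂˣ, ∀ i j, g.val i j = if i = σ j then (d j : ℂ) else 0

lemma IsUMono.unique {g : GL (Fin 3) ℂ} {σ τ : Equiv.Perm (Fin 3)}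
    (h1 : IsUMono g σ) (h2 : IsUMono g τ) : σ = τ := by
  obtain ⟨d, hd⟩ := h1
  obtain ⟨e, he⟩ := h2
  refine Equiv.ext fun j => ?_
  by_contra hne
  have h3 := hd (σ j) j
  have h4 := he (σ j) j
  rw [if_pos rfl] at h3
  rw [if_neg hne] at h4
  exact (d j).ne_zero (h3.symm.trans h4)

lemma IsUMono.mul {g h : GL (Fin 3) ℂ} {σ τ : Equiv.Perm (Fin 3)}
    (hg : IsUMono g σ) (hh : IsUMono h τ) : IsUMono (g * h) (σ * τ) := by
  obtain ⟨d, hd⟩ := hg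
  obtain ⟨e, he⟩ := hh
  refine ⟨fun j => d (τ j) * e j, fun i j => ?_⟩
  show (g.val * h.val) i j = _
  rw [Matrix.mul_apply]
  simp only [hd, he, mul_ite, ite_mul, zero_mul, mul_zero]
  simp [Finset.sum_ite_eq' Finset.univ (τ j), Equiv.Perm.mul_apply]
  congr

lemma IsUMono.one : IsUMono 1 1 :=
  ⟨1, fun i j => by simp [Matrix.one_apply, eq_comm]; congr⟩

lemma IsUMono.inv {g : GL (Fin 3) ℂ} {σ : Equiv.Perm (Fin 3)}
    (hg : IsUMono g σ) : IsUMono g⁻¹ σ⁻¹ := by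
  obtain ⟨d, hd⟩ := hg
  refine ⟨fun j => (d (σ⁻¹ j))⁻¹, fun i j => ?_⟩
  have key : g.val * (Matrix.of fun i j => if j = σ i then ((d i)⁻¹ : ℂ) else 0) = 1 := by
    ext i j
    have hterm : ∀ k, (if i = σ k then (d k : ℂ) else 0) *
        (if j = σ k then ((d k)⁻¹ : ℂ) else 0) = if k = σ⁻¹ j then (if i = j then 1 else 0) else 0 := by
      intro k
      rcases eq_or_ne k (σ⁻¹ j) with rfl | hk
      · have hj : j = σ (σ⁻¹ j) := (Equiv.apply_symm_apply σ j).symm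
        rcases eq_or_ne i j with rfl | hij
        · simp [← hj, Units.mul_inv]
        · rw [if_neg (by rw [← hj]; exact hij), if_pos rfl, if_pos hj, if_neg hij, zero_mul]
      · have hjk : j ≠ σ k := fun h => hk (by rw [h]; simp)
        rw [if_neg hjk, if_neg hk, mul_zero]
    rw [Matrix.mul_apply]
    simp only [hd, Matrix.of_apply]
    rw [Finset.sum_congr rfl fun k _ => hterm k, Finset.sum_ite_eq' Finset.univ]
    simp [Matrix.one_apply]
  have hval : (g⁻¹).val = Matrix.of fun i j => if j = σ i then ((d i)⁻¹ : ℂ) else 0 :=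
    Units.inv_eq_of_mul_eq_one_right key
  rw [hval]
  rcases eq_or_ne i (σ⁻¹ j) with rfl | hij
  · simp [Equiv.apply_symm_apply, Units.val_inv_eq_inv_val]
  · have : j ≠ σ i := fun h => hij (by rw [h]; simp)
    simp [this, hij]
    exact fun h => absurd h hij

/-- The subgroup of monomial matrices in `GL(3, ℂ)`. -/
def MonoGrp : Subgroup (GL (Fin 3) ℂ) where
  carrier := {g | ∃ σ, IsUMono g σ}
  mul_mem' := fun ⟨σ, hσ⟩ ⟨τ, hτ⟩ => ⟨σ * τ, hσ.mul hτ⟩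
  one_mem' := ⟨1, IsUMono.one⟩
  inv_mem' := fun ⟨σ, hσ⟩ => ⟨σ⁻¹, hσ.inv⟩

/-- The permutation underlying a monomial matrix. -/
noncomputable def permOf (g : MonoGrp) : Equiv.Perm (Fin 3) := g.2.choose

lemma permOf_eq (g : MonoGrp) (σ : Equiv.Perm (Fin 3)) (h : IsUMono g.1 σ) : permOf g = σ :=
  IsUMono.unique g.2.choose_spec h

/-- The homomorphism sending a monomial matrix to its permutation. -/
noncomputable def permHom : MonoGrp →* Equiv.Perm (Fin 3) where
  toFun := permOf
  map_one' := permOf_eq 1 1 IsUMono.one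
  map_mul' := fun g h => permOf_eq (g * h) (permOf g * permOf h)
    (IsUMono.mul g.2.choose_spec h.2.choose_spec)

lemma closure_hom_ext {G M : Type*} [Group G] [Group M] {S : Set G}
    {φ χ : ↥(Subgroup.closure S) →* M}
    (h : ∀ x (hx : x ∈ Subgroup.closure S), x ∈ S → φ ⟨x, hx⟩ = χ ⟨x, hx⟩) : φ = χ := by
  ext g
  obtain ⟨x, hx⟩ := g
  induction hx using Subgroup.closure_induction with
  | mem x hx => exact h x _ hx
  | one => exact (map_one φ).trans (map_one χ).symm
  | mul x y hx hy ihx ihy =>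
      have h2 : (⟨x * y, mul_mem hx hy⟩ : ↥(Subgroup.closure S)) = ⟨x, hx⟩ * ⟨y, hy⟩ := rfl
      rw [h2, _root_.map_mul, _root_.map_mul, ihx, ihy]
  | inv x hx ih =>
      have h2 : (⟨x⁻¹, inv_mem hx⟩ : ↥(Subgroup.closure S)) = (⟨x, hx⟩ : ↥(Subgroup.closure S))⁻¹ := rfl
      rw [h2, _root_.map_inv, _root_.map_inv, ih]

/-- The group `Δ(6n²)`, generated by `E`, `I` and `L_n` inside `GL(3,ℂ)`, has exactly `2`
one-dimensional irreducible representations, i.e. homomorphisms into `ℂˣ`. -/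
theorem delta_6n2_singlets (n : ℕ) (hn : 2 ≤ n) (E I L : GL (Fin 3) ℂ)
    (hE : E.val = Ematrix) (hI : I.val = Imatrix) (hL : L.val = Lmatrix n) :
    Nat.card (↥(Subgroup.closure ({E, I, L} : Set (GL (Fin 3) ℂ))) →* ℂˣ) = 2 := by
  set c : ℂ := Complex.exp (2 * (Real.pi : ℂ) * Complex.I / (n : ℂ)) with hc_def
  have hc : c ≠ 0 := Complex.exp_ne_zero _
  have hLm : Lmatrix n = !![1, 0, 0; 0, c, 0; 0, 0, c⁻¹] := by
    ext i j
    fin_cases i <;> fin_cases j <;> simp [Lmatrix, Matrix.diagonal, ← hc_def, Matrix.vecHead, Matrix.vecTail]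
  set S : Set (GL (Fin 3) ℂ) := {E, I, L} with hS
  set W : Subgroup (GL (Fin 3) ℂ) := Subgroup.closure S with hW
  have hEW : E ∈ W := Subgroup.subset_closure (by simp [hS])
  have hIW : I ∈ W := Subgroup.subset_closure (by simp [hS])
  have hLW : L ∈ W := Subgroup.subset_closure (by simp [hS])
  -- generators are monomial
  have hEm : IsUMono E (Equiv.swap 0 2 * Equiv.swap 2 1) := by
    refine ⟨1, fun i j => ?_⟩
    rw [hE]
    fin_cases i <;> fin_cases j <;>
      simp [Ematrix, Equiv.swap_apply_def, Fin.ext_iff, Matrix.vecHead, Matrix.vecTail]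
  have hIm : IsUMono I (Equiv.swap 0 2) := by
    refine ⟨fun _ => -1, fun i j => ?_⟩
    rw [hI]
    fin_cases i <;> fin_cases j <;>
      simp [Imatrix, Equiv.swap_apply_def, Fin.ext_iff, Matrix.vecHead, Matrix.vecTail]
  have hLmono : IsUMono L 1 := by
    refine ⟨![1, Units.mk0 c hc, (Units.mk0 c hc)⁻¹], fun i j => ?_⟩
    rw [hL, hLm]
    fin_cases i <;> fin_cases j <;>
      simp [Units.val_inv_eq_inv_val, Fin.ext_iff, Matrix.vecHead, Matrix.vecTail]
  have hWM : W ≤ MonoGrp := by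
    rw [hW, hS]
    refine (Subgroup.closure_le _).2 ?_
    rintro x (rfl | rfl | rfl)
    · exact ⟨_, hEm⟩
    · exact ⟨_, hIm⟩
    · exact ⟨_, hLmono⟩
  -- the sign character
  set ψ : ↥W →* ℂˣ :=
    ((Units.map (Int.castRingHom ℂ).toMonoidHom).comp
      (Equiv.Perm.sign.comp permHom)).comp (Subgroup.inclusion hWM) with hψdef
  have hψval : ∀ (g : GL (Fin 3) ℂ) (hg : g ∈ W) (σ : Equiv.Perm (Fin 3)), IsUMono g σ →
      ψ ⟨g, hg⟩ = Units.map (Int.castRingHom ℂ).toMonoidHom (Equiv.Perm.sign σ) := by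
    intro g hg σ hσ
    have : permHom (Subgroup.inclusion hWM ⟨g, hg⟩) = σ :=
      permOf_eq ⟨g, hWM hg⟩ σ hσ
    simp only [hψdef, MonoidHom.comp_apply, this]
  have hψE : ψ ⟨E, hEW⟩ = 1 := by
    rw [hψval E hEW _ hEm]
    norm_num [Equiv.Perm.sign_swap, Fin.ext_iff]
  have hψI : ψ ⟨I, hIW⟩ = -1 := by
    rw [hψval I hIW _ hIm]
    rw [Equiv.Perm.sign_swap (by decide)]
    ext
    simp
  have hψL : ψ ⟨L, hLW⟩ = 1 := by
    rw [hψval L hLW _ hLmono]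
    simp
  -- relations among the generators
  have hII : I * I = 1 := by
    apply Units.ext
    rw [Units.val_mul, hI, Units.val_one, Imatrix, Matrix.one_fin_three]
    norm_num [Matrix.mul_fin_three]
  have hIEI : I * E * I = E * E := by
    apply Units.ext
    simp only [Units.val_mul, hI, hE, Imatrix, Ematrix]
    norm_num [Matrix.mul_fin_three]
  have hrel : L * (E * E * L * E) = I * L * I := by
    apply Units.ext
    simp only [Units.val_mul, hI, hE, hL, hLm, Imatrix, Ematrix]
    norm_num [Matrix.mul_fin_three, mul_inv_cancel₀ hc, inv_mul_cancel₀ hc]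
  -- lift the relations to the subgroup
  set Ew : ↥W := ⟨E, hEW⟩
  set Iw : ↥W := ⟨I, hIW⟩
  set Lw : ↥W := ⟨L, hLW⟩
  have hII' : Iw * Iw = 1 := Subtype.ext hII
  have hIEI' : Iw * Ew * Iw = Ew * Ew := Subtype.ext hIEI
  have hrel' : Lw * (Ew * Ew * Lw * Ew) = Iw * Lw * Iw := Subtype.ext hrel
  -- every character is 1 or ψ
  have hmain : ∀ φ : ↥W →* ℂˣ, φ = 1 ∨ φ = ψ := by
    intro φ
    have hb2 : (φ Iw : ℂ) * (φ Iw : ℂ) = 1 := by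
      rw [← Units.val_mul, ← _root_.map_mul, hII', _root_.map_one, Units.val_one]
    have h2 : (φ Iw : ℂ) * (φ Ew : ℂ) * (φ Iw : ℂ) = (φ Ew : ℂ) * (φ Ew : ℂ) := by
      have := congrArg (fun u => ((φ u : ℂˣ) : ℂ)) hIEI'
      simpa [_root_.map_mul] using this
    have hA : (φ Ew : ℂ) = 1 := by
      have hAA : (φ Ew : ℂ) * (φ Ew : ℂ) = (φ Ew : ℂ) := by
        linear_combination (-1 : ℂ) * h2 + (φ Ew : ℂ) * hb2
      exact mul_left_cancel₀ (φ Ew).ne_zero (hAA.trans (mul_one _).symm)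
    have h3 : (φ Lw : ℂ) * ((φ Ew : ℂ) * (φ Ew : ℂ) * (φ Lw : ℂ) * (φ Ew : ℂ)) =
        (φ Iw : ℂ) * (φ Lw : ℂ) * (φ Iw : ℂ) := by
      have := congrArg (fun u => ((φ u : ℂˣ) : ℂ)) hrel'
      simpa [_root_.map_mul] using this
    have hLv : (φ Lw : ℂ) = 1 := by
      rw [hA] at h3
      have hLL : (φ Lw : ℂ) * (φ Lw : ℂ) = (φ Lw : ℂ) := by
        linear_combination h3 + (φ Lw : ℂ) * hb2 - hb2 * 0
      exact mul_left_cancel₀ (φ Lw).ne_zero (hLL.trans (mul_one _).symm)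
    have hBv : (φ Iw : ℂ) = 1 ∨ (φ Iw : ℂ) = -1 := mul_self_eq_one_iff.mp hb2
    have hφE : φ Ew = 1 := Units.ext (by rw [hA, Units.val_one])
    have hφL : φ Lw = 1 := Units.ext (by rw [hLv, Units.val_one])
    rcases hBv with hB | hB
    · left
      have hφI : φ Iw = 1 := Units.ext (by rw [hB]; simp)
      apply closure_hom_ext
      rintro x hx (rfl | rfl | rfl)
      · exact hφE.trans rfl
      · exact hφI.trans rfl
      · exact hφL.trans rfl
    · right
      have hφI : φ Iw = -1 := Units.ext (by rw [hB]; simp)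
      apply closure_hom_ext
      rintro x hx (rfl | rfl | rfl)
      · exact hφE.trans hψE.symm
      · exact hφI.trans hψI.symm
      · exact hφL.trans hψL.symm
  have hne : (1 : ↥W →* ℂˣ) ≠ ψ := by
    intro h
    have : (1 : ↥W →* ℂˣ) Iw = ψ Iw := by rw [h]
    rw [hψI, MonoidHom.one_apply] at this
    have := congrArg Units.val this
    norm_num at this
  rw [Nat.card_eq_two_iff]
  refine ⟨1, ψ, hne, ?_⟩
  apply Set.eq_univ_iff_forall.2
  intro φ
  rcases hmain φ with h | h <;> simp [h]
end
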